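/- Let G be a simple graph, C a cycle in G, and K a clique of G. Let Z be the set of vertices that are incident in C with at least one edge of E(C) ∩ E(K), write Z = {v_1, …, v_{k'}} with an arbitrary ordering. Then there is a cycle C' in G with V(C') = V(C) such that E(C') ∖ E(Z) = E(C) ∖ E(Z), and for every j ∈ {1, …, k'}, at most 2 edges of E(C') ∩ E(Z) have one endpoint in {v_1, …, v_j} and the other in {v_{j+1}, …, v_{k'}}. -/

import Mathlib

open SimpleGraph

section Defs

variable {V : Type*} {ι : Type*}

/-- `W, U` is a bipartition of the simple graph `B`. -/
def IsBipartition (B : SimpleGraph V) (W U : Set V) : Prop :=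
  (∀ v, v ∈ W ∨ v ∈ U) ∧ (∀ v, ¬(v ∈ W ∧ v ∈ U)) ∧
    ∀ ⦃a b⦄, B.Adj a b → (a ∈ W ∧ b ∈ U) ∨ (a ∈ U ∧ b ∈ W)

/-- The half-square of `B` on side `W`: two distinct vertices of `W` are adjacent
iff they have a common neighbor in `B`. -/
def halfSquare (B : SimpleGraph V) (W : Set V) : SimpleGraph V where
  Adj a b := a ≠ b ∧ a ∈ W ∧ b ∈ W ∧ ∃ s, B.Adj a s ∧ B.Adj b s
  symm := by
    constructor; rintro a b ⟨hne, ha, hb, s, h1, h2⟩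
    exact ⟨hne.symm, hb, ha, s, h2, h1⟩
  loopless := by constructor; rintro a ⟨hne, _⟩; exact hne rfl

/-- Tree decomposition of the graph `H` with vertex set `S`, over the tree `T`. -/
structure IsTreeDecompOn (H : SimpleGraph V) (S : Set V) (T : SimpleGraph ι)
    (β : ι → Set V) : Prop where
  covers : ∀ v ∈ S, ∃ t, v ∈ β t
  edge_mem : ∀ ⦃u v⦄, H.Adj u v → ∃ t, u ∈ β t ∧ v ∈ β t
  conn : ∀ v ∈ S, (T.induce {t | v ∈ β t}).Connected

/-- `t'` is a descendant of `t` (inclusively) in the tree `T` rooted at `r`: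
`t` lies on every path from `t'` to the root. -/
def Desc (T : SimpleGraph ι) (r : ι) (t t' : ι) : Prop :=
  ∀ p : T.Walk t' r, p.IsPath → t ∈ p.support

/-- `γ(t)`: union of the bags of `t` and of all its descendants. -/
def gammaSet (T : SimpleGraph ι) (r : ι) (β : ι → Set V) (t : ι) : Set V :=
  ⋃ t' ∈ {t' | Desc T r t t'}, β t'

/-- The bag of the derived decomposition. -/
def derivedBag (B : SimpleGraph V) (W U : Set V) (T : SimpleGraph ι) (r : ι)
    (β : ι → Set V) (t : ι) : Set V :=
  (β t ∩ W) ∪ ⋃ s ∈ β t ∩ U, B.neighborSet s ∩ gammaSet T r β t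

def originalSet (B : SimpleGraph V) (W U : Set V) (T : SimpleGraph ι) (r : ι)
    (β : ι → Set V) (t : ι) : Set V :=
  β t ∩ derivedBag B W U T r β t

def fakeSet (B : SimpleGraph V) (W U : Set V) (T : SimpleGraph ι) (r : ι)
    (β : ι → Set V) (t : ι) : Set V :=
  derivedBag B W U T r β t \ β t

def cliquesAt (B : SimpleGraph V) (U : Set V) (β : ι → Set V) (t : ι) : Set (Set V) :=
  {K | ∃ s ∈ β t ∩ U, K = B.neighborSet s}

def IsChild (T : SimpleGraph ι) (r : ι) (t t' : ι) : Prop :=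
  T.Adj t t' ∧ Desc T r t t'

def IsLeafNode (T : SimpleGraph ι) (r : ι) (β : ι → Set V) (t : ι) : Prop :=
  (∀ t', ¬ IsChild T r t t') ∧ β t = ∅

def IsForgetNode (T : SimpleGraph ι) (r : ι) (β : ι → Set V) (w : V) (t : ι) : Prop :=
  ∃ t', IsChild T r t t' ∧ (∀ t'', IsChild T r t t'' → t'' = t') ∧
    w ∈ β t' ∧ β t = β t' \ {w}

def IsIntroduceNode (T : SimpleGraph ι) (r : ι) (β : ι → Set V) (w : V) (t : ι) : Prop :=
  ∃ t', IsChild T r t t' ∧ (∀ t'', IsChild T r t t'' → t'' = t') ∧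
    w ∈ β t ∧ β t \ {w} = β t'

def IsJoinNode (T : SimpleGraph ι) (r : ι) (β : ι → Set V) (t : ι) : Prop :=
  ∃ t₁ t₂, t₁ ≠ t₂ ∧ IsChild T r t t₁ ∧ IsChild T r t t₂ ∧
    (∀ t'', IsChild T r t t'' → t'' = t₁ ∨ t'' = t₂) ∧ β t = β t₁ ∧ β t = β t₂

/-- A nice (rooted) tree decomposition. -/
def IsNice (T : SimpleGraph ι) (r : ι) (β : ι → Set V) : Prop :=
  β r = ∅ ∧ ∀ t, IsLeafNode T r β t ∨ (∃ w, IsForgetNode T r β w t) ∨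
    (∃ w, IsIntroduceNode T r β w t) ∨ IsJoinNode T r β t

/-- `E(X)`: edges of `G` with both endpoints in `X`. -/
def edgesIn (G : SimpleGraph V) (X : Set V) : Set (Sym2 V) :=
  {e | e ∈ G.edgeSet ∧ ∀ x ∈ e, x ∈ X}

end Defs

section Aux

open Walk

variable {V : Type*} {G : SimpleGraph V}

variable {V : Type*} {G : SimpleGraph V}

lemma darts_decomp {u w : V} (p : G.Walk u w) (d : G.Dart) (hd : d ∈ p.darts) :
    ∃ (q : G.Walk u d.fst) (r : G.Walk d.snd w),
      p = q.append (Walk.cons d.adj r) := by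
  induction p with
  | nil => simp at hd
  | cons h p ih =>
    rw [Walk.darts_cons, List.mem_cons] at hd
    rcases hd with hd | hd
    · subst hd
      exact ⟨Walk.nil, p, rfl⟩
    · obtain ⟨q, r, hqr⟩ := ih hd
      exact ⟨Walk.cons h q, r, by rw [Walk.cons_append, ← hqr]⟩

lemma darts_decomp2 {u w : V} (p : G.Walk u w) (d₁ d₂ : G.Dart)
    (h1 : d₁ ∈ p.darts) (h2 : d₂ ∈ p.darts) (hne : d₁ ≠ d₂) :
    ∃ (e₁ e₂ : G.Dart), ((e₁ = d₁ ∧ e₂ = d₂) ∨ (e₁ = d₂ ∧ e₂ = d₁)) ∧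
      ∃ (q : G.Walk u e₁.fst) (r : G.Walk e₁.snd e₂.fst) (s : G.Walk e₂.snd w),
        p = q.append (Walk.cons e₁.adj (r.append (Walk.cons e₂.adj s))) := by
  induction p with
  | nil => simp at h1
  | cons h p ih =>
    rw [Walk.darts_cons, List.mem_cons] at h1 h2
    rcases h1 with h1 | h1
    · have h2' : d₂ ∈ p.darts := by
        rcases h2 with h2 | h2
        · exact absurd (h1.trans h2.symm) hne
        · exact h2
      obtain ⟨r, s, hrs⟩ := darts_decomp p d₂ h2'
      refine ⟨d₁, d₂, Or.inl ⟨rfl, rfl⟩, ?_⟩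
      subst h1
      exact ⟨Walk.nil, r, s, by rw [Walk.nil_append, hrs]⟩
    · rcases h2 with h2 | h2
      · obtain ⟨r, s, hrs⟩ := darts_decomp p d₁ h1
        refine ⟨d₂, d₁, Or.inr ⟨rfl, rfl⟩, ?_⟩
        subst h2
        exact ⟨Walk.nil, r, s, by rw [Walk.nil_append, hrs]⟩
      · obtain ⟨e₁, e₂, hor, q, r, s, hqrs⟩ := ih h1 h2
        exact ⟨e₁, e₂, hor, Walk.cons h q, r, s, by rw [Walk.cons_append, ← hqrs]⟩
lemma surgery {w a b c d : V}
    (P1 : G.Walk w a) (P2 : G.Walk b c) (P3 : G.Walk d w)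
    (hab : G.Adj a b) (hcd : G.Adj c d)
    (had : a ≠ d) (hbc : b ≠ c)
    (hC : (P1.append (Walk.cons hab (P2.append (Walk.cons hcd P3)))).IsCycle)
    (hadj : ∀ x y : V, x ∈ ({a,b,c,d} : Set V) → y ∈ ({a,b,c,d} : Set V) → x ≠ y → G.Adj x y) :
    ∃ C' : G.Walk w w, C'.IsCycle ∧
      (∀ x, x ∈ C'.support ↔
        x ∈ (P1.append (Walk.cons hab (P2.append (Walk.cons hcd P3)))).support) ∧
      (∀ e, e ∈ C'.edges ↔
        ((e ∈ (P1.append (Walk.cons hab (P2.append (Walk.cons hcd P3)))).edges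
          ∧ e ≠ s(a,b) ∧ e ≠ s(c,d)) ∨ e = s(a,c) ∨ e = s(b,d))) := by
  have hsupC : (P1.append (Walk.cons hab (P2.append (Walk.cons hcd P3)))).support
      = P1.support ++ (P2.support ++ P3.support) := by
    rw [Walk.support_append, Walk.support_cons, List.tail_cons, Walk.support_append,
      Walk.support_cons, List.tail_cons]
  have hN : (P1.support.tail ++ (P2.support ++ P3.support)).Nodup := by
    have h := hC.support_nodup
    rw [hsupC] at h
    rwa [Walk.support_eq_cons, List.cons_append, List.tail_cons] at h
  obtain ⟨hN1, hN23, hD1⟩ := List.nodup_append.mp hN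
  obtain ⟨hN2, hN3, hD23⟩ := List.nodup_append.mp hN23
  have haP1 : a ∈ P1.support := Walk.end_mem_support P1
  have hbP2 : b ∈ P2.support := Walk.start_mem_support P2
  have hcP2 : c ∈ P2.support := Walk.end_mem_support P2
  have hdP3 : d ∈ P3.support := Walk.start_mem_support P3
  have hwP3 : w ∈ P3.support := Walk.end_mem_support P3
  have key1 : ∀ x, x ∈ P2.support → x ∉ P1.support := by
    intro x hx hx1
    rw [Walk.support_eq_cons, List.mem_cons] at hx1
    rcases hx1 with rfl | hx1
    · exact hD23 _ hx _ hwP3 rfl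
    · exact hD1 _ hx1 _ (List.mem_append.mpr (Or.inl hx)) rfl
  have hcP1 : c ∉ P1.support := key1 c hcP2
  have hbP1 : b ∉ P1.support := key1 b hbP2
  have hcP3 : c ∉ P3.support := fun h => hD23 _ hcP2 _ h rfl
  have hbP3 : b ∉ P3.support := fun h => hD23 _ hbP2 _ h rfl
  have hdP2 : d ∉ P2.support := fun h => hD23 _ h _ hdP3 rfl
  have haP2 : a ∉ P2.support := fun h => key1 a h haP1
  have hac : a ≠ c := fun h => hcP1 (h ▸ haP1)
  have hbd : b ≠ d := fun h => hD23 b hbP2 b (h ▸ hdP3) rfl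
  have hAC : G.Adj a c := hadj a c (by simp) (by simp) hac
  have hBD : G.Adj b d := hadj b d (by simp) (by simp) hbd
  have hedC : (P1.append (Walk.cons hab (P2.append (Walk.cons hcd P3)))).edges
      = P1.edges ++ (s(a,b) :: (P2.edges ++ (s(c,d) :: P3.edges))) := by
    rw [Walk.edges_append, Walk.edges_cons, Walk.edges_append, Walk.edges_cons]
  have hedC' : (P1.append (Walk.cons hAC (P2.reverse.append (Walk.cons hBD P3)))).edges
      = P1.edges ++ (s(a,c) :: (P2.edges.reverse ++ (s(b,d) :: P3.edges))) := by
    rw [Walk.edges_append, Walk.edges_cons, Walk.edges_append, Walk.edges_cons,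
      Walk.edges_reverse]
  have hE := hC.isCircuit.isTrail.edges_nodup
  rw [hedC] at hE
  simp only [List.nodup_append, List.nodup_cons, List.mem_append, List.mem_cons,
    List.disjoint_left] at hE
  obtain ⟨hEP1, ⟨hEab, hEP2, ⟨hEcd3, hEP3⟩, hD23e⟩, hD1e⟩ := hE
  push_neg at hEab
  obtain ⟨hEab2, hEabcd, hEab3⟩ := hEab
  have f1 : s(a,c) ∉ P1.edges := fun h => hcP1 (Walk.snd_mem_support_of_mem_edges P1 h)
  have f2 : s(a,c) ∉ P2.edges := fun h => haP2 (Walk.fst_mem_support_of_mem_edges P2 h)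
  have f3 : s(a,c) ∉ P3.edges := fun h => hcP3 (Walk.snd_mem_support_of_mem_edges P3 h)
  have g1 : s(b,d) ∉ P1.edges := fun h => hbP1 (Walk.fst_mem_support_of_mem_edges P1 h)
  have g2 : s(b,d) ∉ P2.edges := fun h => hdP2 (Walk.snd_mem_support_of_mem_edges P2 h)
  have g3 : s(b,d) ∉ P3.edges := fun h => hbP3 (Walk.fst_mem_support_of_mem_edges P3 h)
  have q1 : s(a,c) ≠ s(a,b) := by
    intro h
    rcases Sym2.eq_iff.mp h with ⟨-, h2⟩ | ⟨h1, -⟩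
    · exact hbc h2.symm
    · exact hab.ne h1
  have q2 : s(a,c) ≠ s(c,d) := by
    intro h
    rcases Sym2.eq_iff.mp h with ⟨h1, -⟩ | ⟨h1, -⟩
    · exact hac h1
    · exact had h1
  have q3 : s(b,d) ≠ s(a,b) := by
    intro h
    rcases Sym2.eq_iff.mp h with ⟨h1, -⟩ | ⟨-, h2⟩
    · exact hab.ne h1.symm
    · exact had h2.symm
  have q4 : s(b,d) ≠ s(c,d) := by
    intro h
    rcases Sym2.eq_iff.mp h with ⟨h1, -⟩ | ⟨h1, h2⟩
    · exact hbc h1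
    · exact hbd h1
  have q5 : s(a,c) ≠ s(b,d) := by
    intro h
    rcases Sym2.eq_iff.mp h with ⟨h1, -⟩ | ⟨h1, -⟩
    · exact hab.ne h1
    · exact had h1
  refine ⟨P1.append (Walk.cons hAC (P2.reverse.append (Walk.cons hBD P3))), ?_, ?_, ?_⟩
  · rw [Walk.isCycle_def]
    refine ⟨?_, ?_, ?_⟩
    · rw [Walk.isTrail_def, hedC']
      simp only [List.nodup_append, List.nodup_cons, List.mem_append, List.mem_cons,
        List.disjoint_left, List.nodup_reverse, List.mem_reverse]
      refine ⟨hEP1, ⟨?_, hEP2, ⟨g3, hEP3⟩, ?_⟩, ?_⟩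
      · rintro (h | h | h)
        · exact f2 h
        · exact q5 h
        · exact f3 h
      · intro e he b' hb' hEq
        subst hEq
        rcases hb' with (rfl | h)
        · exact g2 he
        · exact hD23e _ he _ (Or.inr h) rfl
      · intro e he b' hb' hEq
        subst hEq
        rcases hb' with (rfl | h | rfl | h)
        · exact f1 he
        · exact hD1e _ he _ (Or.inr (Or.inl h)) rfl
        · exact g1 he
        · exact hD1e _ he _ (Or.inr (Or.inr (Or.inr h))) rfl
    · intro h
      have hmem : s(a,c) ∈ (P1.append (Walk.cons hAC (P2.reverse.append
          (Walk.cons hBD P3)))).edges := by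
        rw [hedC']
        simp
      rw [h] at hmem
      simp at hmem
    · have hsupC' : (P1.append (Walk.cons hAC (P2.reverse.append (Walk.cons hBD P3)))).support
          = P1.support ++ (P2.support.reverse ++ P3.support) := by
        rw [Walk.support_append, Walk.support_cons, List.tail_cons, Walk.support_append,
          Walk.support_cons, List.tail_cons, Walk.support_reverse]
      rw [hsupC', Walk.support_eq_cons, List.cons_append, List.tail_cons]
      have hperm : (P1.support.tail ++ (P2.support.reverse ++ P3.support)).Perm
          (P1.support.tail ++ (P2.support ++ P3.support)) :=
        List.Perm.append_left _ (List.Perm.append_right _ (List.reverse_perm P2.support))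
      exact hperm.nodup_iff.mpr hN
  · intro x
    have hsupC' : (P1.append (Walk.cons hAC (P2.reverse.append (Walk.cons hBD P3)))).support
        = P1.support ++ (P2.support.reverse ++ P3.support) := by
      rw [Walk.support_append, Walk.support_cons, List.tail_cons, Walk.support_append,
        Walk.support_cons, List.tail_cons, Walk.support_reverse]
    rw [hsupC', hsupC]
    simp [List.mem_append, List.mem_reverse]
  · intro e
    rw [hedC', hedC]
    simp only [List.mem_append, List.mem_cons, List.mem_reverse]
    constructor
    · rintro (h | h | h | h | h)
      · refine Or.inl ⟨Or.inl h, ?_, ?_⟩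
        · intro he; exact hD1e _ h _ (Or.inl rfl) he
        · intro he; exact hD1e _ h _ (Or.inr (Or.inr (Or.inl rfl))) he
      · exact Or.inr (Or.inl h)
      · refine Or.inl ⟨Or.inr (Or.inr (Or.inl h)), ?_, ?_⟩
        · intro he; exact hEab2 (he ▸ h)
        · intro he; exact hD23e _ h _ (Or.inl rfl) he
      · exact Or.inr (Or.inr h)
      · refine Or.inl ⟨Or.inr (Or.inr (Or.inr (Or.inr h))), ?_, ?_⟩
        · intro he; exact hEab3 (he ▸ h)
        · intro he; exact hEcd3 (he ▸ h)
    · rintro (⟨(h | h | h | h | h), hne1, hne2⟩ | h | h)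
      · exact Or.inl h
      · exact absurd h hne1
      · exact Or.inr (Or.inr (Or.inl h))
      · exact absurd h hne2
      · exact Or.inr (Or.inr (Or.inr (Or.inr h)))
      · exact Or.inr (Or.inl h)
      · exact Or.inr (Or.inr (Or.inr (Or.inl h)))

section Cross
variable {V : Type*} {k' : ℕ}

def crossPred (G : SimpleGraph V) (v : Fin k' → V) (j : Fin k') (e : Sym2 V) : Prop :=
  e ∈ edgesIn G (Set.range v) ∧
    ∃ p q, e = s(p, q) ∧ p ∈ v '' {i | i ≤ j} ∧ q ∈ v '' {i | j < i}

def crossSet (G : SimpleGraph V) (v : Fin k' → V) {w : V} (C : G.Walk w w) (j : Fin k') :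
    Set (Sym2 V) :=
  {e | e ∈ C.edges ∧ crossPred G v j e}

lemma crossPred_iff {G : SimpleGraph V} {v : Fin k' → V} (hinj : Function.Injective v)
    (j i1 i2 : Fin k') :
    crossPred G v j (s(v i1, v i2)) ↔ G.Adj (v i1) (v i2) ∧
      ((i1.val ≤ j.val ∧ j.val < i2.val) ∨ (i2.val ≤ j.val ∧ j.val < i1.val)) := by
  constructor
  · rintro ⟨⟨hE, -⟩, p, q, heq, ⟨i, hi, rfl⟩, ⟨i', hi', rfl⟩⟩
    refine ⟨G.mem_edgeSet.mp hE, ?_⟩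
    simp only [Set.mem_setOf_eq] at hi hi'
    rcases Sym2.eq_iff.mp heq with ⟨h1, h2⟩ | ⟨h1, h2⟩
    · left
      rw [hinj h1, hinj h2]
      exact ⟨hi, hi'⟩
    · right
      rw [hinj h1, hinj h2]
      exact ⟨hi, hi'⟩
  · rintro ⟨hadj, h⟩
    refine ⟨⟨G.mem_edgeSet.mpr hadj, ?_⟩, ?_⟩
    · intro x hx
      rcases Sym2.mem_iff.mp hx with rfl | rfl
      exacts [⟨i1, rfl⟩, ⟨i2, rfl⟩]
    · rcases h with ⟨h1, h2⟩ | ⟨h1, h2⟩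
      · exact ⟨v i1, v i2, rfl, ⟨i1, h1, rfl⟩, ⟨i2, h2, rfl⟩⟩
      · exact ⟨v i2, v i1, Sym2.eq_swap, ⟨i2, h1, rfl⟩, ⟨i1, h2, rfl⟩⟩

lemma cross_dart {G : SimpleGraph V} {v : Fin k' → V} {w : V} {C : G.Walk w w} {j : Fin k'}
    {e : Sym2 V} (he : e ∈ crossSet G v C j) :
    ∃ (D : G.Dart) (i1 i2 : Fin k'), D ∈ C.darts ∧ D.edge = e ∧ D.fst = v i1 ∧ D.snd = v i2 ∧
      ((i1.val ≤ j.val ∧ j.val < i2.val) ∨ (i2.val ≤ j.val ∧ j.val < i1.val)) := by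
  obtain ⟨heC, -, p, q, heq, ⟨i1, hi1, rfl⟩, ⟨i2, hi2, rfl⟩⟩ := he
  subst heq
  rw [show (Walk.edges C) = C.darts.map Dart.edge from rfl] at heC
  obtain ⟨D, hD, hDe⟩ := List.mem_map.mp heC
  simp only [Set.mem_setOf_eq] at hi1 hi2
  rcases dart_edge_eq_mk'_iff'.mp hDe with ⟨h1, h2⟩ | ⟨h1, h2⟩
  · exact ⟨D, i1, i2, hD, hDe, h1, h2, Or.inl ⟨hi1, hi2⟩⟩
  · exact ⟨D, i2, i1, hD, hDe, h1, h2, Or.inr ⟨hi1, hi2⟩⟩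

end Cross

lemma three_of_ncard {α : Type*} {S : Set α} (hfin : S.Finite) (h : 3 ≤ S.ncard) :
    ∃ x y z, x ∈ S ∧ y ∈ S ∧ z ∈ S ∧ x ≠ y ∧ x ≠ z ∧ y ≠ z := by
  obtain ⟨x, hx⟩ := (Set.ncard_pos hfin).mp (by omega)
  have h1 : (S \ {x}).ncard = S.ncard - 1 := Set.ncard_diff_singleton_of_mem hx
  have hp1 : 0 < (S \ {x}).ncard := by rw [h1]; omega
  obtain ⟨y, hy⟩ := (Set.ncard_pos (hfin.diff)).mp hp1
  have h2 : ((S \ {x}) \ {y}).ncard = (S \ {x}).ncard - 1 :=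
    Set.ncard_diff_singleton_of_mem hy
  have hp2 : 0 < ((S \ {x}) \ {y}).ncard := by rw [h2, h1]; omega
  obtain ⟨z, hz⟩ := (Set.ncard_pos ((hfin.diff).diff)).mp hp2
  refine ⟨x, y, z, hx, hy.1, hz.1.1, ?_, ?_, ?_⟩
  · exact fun h => hy.2 (h ▸ rfl)
  · exact fun h => hz.1.2 (h ▸ rfl)
  · exact fun h => hz.2 (h ▸ rfl)

lemma ncard_aux {α : Type*} {S S' : Set α} (hfin : S.Finite) {x y : α} (hy : y ∈ S)
    (hsub : S' ⊆ insert x (S \ {y})) : S'.ncard ≤ S.ncard := by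
  have h1 : S'.ncard ≤ (insert x (S \ {y})).ncard :=
    Set.ncard_le_ncard hsub ((hfin.diff).insert _)
  have h2 : (insert x (S \ {y})).ncard ≤ (S \ {y}).ncard + 1 := Set.ncard_insert_le _ _
  have h3 : (S \ {y}).ncard = S.ncard - 1 := Set.ncard_diff_singleton_of_mem hy
  have h4 : 0 < S.ncard := (Set.ncard_pos hfin).mpr ⟨y, hy⟩
  omega
lemma step {V : Type*} [Fintype V] [DecidableEq V] {G : SimpleGraph V} {k' : ℕ} {v : Fin k' → V}
    (hinj : Function.Injective v)
    (hadj : ∀ a b : Fin k', a ≠ b → G.Adj (v a) (v b))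
    {w : V} {C : G.Walk w w} (hC : C.IsCycle) {j : Fin k'}
    (hj : 3 ≤ (crossSet G v C j).ncard)
    {a b c d : V} {i1 i2 i3 i4 : Fin k'}
    (hva : a = v i1) (hvb : b = v i2) (hvc : c = v i3) (hvd : d = v i4)
    {hab : G.Adj a b} {hcd : G.Adj c d}
    {P1 : G.Walk w a} {P2 : G.Walk b c} {P3 : G.Walk d w}
    (hdec : C = P1.append (Walk.cons hab (P2.append (Walk.cons hcd P3))))
    (hcr1 : s(a, b) ∈ crossSet G v C j) (hcr2 : s(c, d) ∈ crossSet G v C j)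
    (hne : s(a, b) ≠ s(c, d))
    (hside : (i1.val ≤ j.val ∧ i3.val ≤ j.val ∧ j.val < i2.val ∧ j.val < i4.val) ∨
             (j.val < i1.val ∧ j.val < i3.val ∧ i2.val ≤ j.val ∧ i4.val ≤ j.val)) :
    ∃ C' : G.Walk w w, C'.IsCycle ∧
      (∀ x, x ∈ C'.support ↔ x ∈ C.support) ∧
      (∀ e, e ∉ edgesIn G (Set.range v) → (e ∈ C'.edges ↔ e ∈ C.edges)) ∧
      (∀ j' : Fin k', (crossSet G v C' j').ncard ≤ (crossSet G v C j').ncard) ∧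
      (crossSet G v C' j).ncard < (crossSet G v C j).ncard := by
  subst hva hvb hvc hvd
  have hi14 : i1 ≠ i4 := by intro h; rw [h] at hside; rcases hside with h' | h' <;> omega
  have hi23 : i2 ≠ i3 := by intro h; rw [h] at hside; rcases hside with h' | h' <;> omega
  have had : v i1 ≠ v i4 := hinj.ne hi14
  have hbc : v i2 ≠ v i3 := hinj.ne hi23
  have hadjset : ∀ x y : V, x ∈ ({v i1, v i2, v i3, v i4} : Set V) →
      y ∈ ({v i1, v i2, v i3, v i4} : Set V) → x ≠ y → G.Adj x y := by
    intro x y hx hy hxy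
    simp only [Set.mem_insert_iff, Set.mem_singleton_iff] at hx hy
    have hxr : ∃ i, x = v i := by
      rcases hx with rfl | rfl | rfl | rfl
      exacts [⟨i1, rfl⟩, ⟨i2, rfl⟩, ⟨i3, rfl⟩, ⟨i4, rfl⟩]
    have hyr : ∃ i, y = v i := by
      rcases hy with rfl | rfl | rfl | rfl
      exacts [⟨i1, rfl⟩, ⟨i2, rfl⟩, ⟨i3, rfl⟩, ⟨i4, rfl⟩]
    obtain ⟨i, rfl⟩ := hxr
    obtain ⟨i', rfl⟩ := hyr
    exact hadj i i' (fun h => hxy (by rw [h]))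
  obtain ⟨C', hcyc, hsup, hedg⟩ := surgery P1 P2 P3 hab hcd had hbc (hdec ▸ hC) hadjset
  have hsup' : ∀ x, x ∈ C'.support ↔ x ∈ C.support := fun x => (hsup x).trans (by rw [hdec])
  have hedg' : ∀ e, e ∈ C'.edges ↔
      ((e ∈ C.edges ∧ e ≠ s(v i1, v i2) ∧ e ≠ s(v i3, v i4)) ∨
        e = s(v i1, v i3) ∨ e = s(v i2, v i4)) := fun e => (hedg e).trans (by rw [hdec])
  have hEZab : s(v i1, v i2) ∈ edgesIn G (Set.range v) := hcr1.2.1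
  have hEZcd : s(v i3, v i4) ∈ edgesIn G (Set.range v) := hcr2.2.1
  have hACmem : s(v i1, v i3) ∈ C'.edges := (hedg' _).mpr (Or.inr (Or.inl rfl))
  have hBDmem : s(v i2, v i4) ∈ C'.edges := (hedg' _).mpr (Or.inr (Or.inr rfl))
  have hEZac : s(v i1, v i3) ∈ edgesIn G (Set.range v) := by
    refine ⟨C'.edges_subset_edgeSet hACmem, ?_⟩
    intro x hx
    rcases Sym2.mem_iff.mp hx with rfl | rfl
    exacts [⟨i1, rfl⟩, ⟨i3, rfl⟩]
  have hEZbd : s(v i2, v i4) ∈ edgesIn G (Set.range v) := by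
    refine ⟨C'.edges_subset_edgeSet hBDmem, ?_⟩
    intro x hx
    rcases Sym2.mem_iff.mp hx with rfl | rfl
    exacts [⟨i2, rfl⟩, ⟨i4, rfl⟩]
  have hsplit : ∀ (j' : Fin k') e, e ∈ crossSet G v C' j' →
      (e ∈ crossSet G v C j' ∧ e ≠ s(v i1, v i2) ∧ e ≠ s(v i3, v i4)) ∨
      ((e = s(v i1, v i3) ∨ e = s(v i2, v i4)) ∧ crossPred G v j' e) := by
    rintro j' e ⟨heC', hp⟩
    rcases (hedg' e).mp heC' with ⟨h1, h2, h3⟩ | h | h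
    · exact Or.inl ⟨⟨h1, hp⟩, h2, h3⟩
    · exact Or.inr ⟨Or.inl h, hp⟩
    · exact Or.inr ⟨Or.inr h, hp⟩
  have hcount : ∀ j' : Fin k', (crossSet G v C' j').ncard ≤ (crossSet G v C j').ncard := by
    intro j'
    by_cases hac' : crossPred G v j' (s(v i1, v i3)) <;>
      by_cases hbd' : crossPred G v j' (s(v i2, v i4))
    · exfalso
      have t1 := ((crossPred_iff hinj j' i1 i3).mp hac').2
      have t2 := ((crossPred_iff hinj j' i2 i4).mp hbd').2
      rcases hside with h | h <;> omega
    · have t1 := ((crossPred_iff hinj j' i1 i3).mp hac').2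
      have hyor : ((i1.val ≤ j'.val ∧ j'.val < i2.val) ∨ (i2.val ≤ j'.val ∧ j'.val < i1.val)) ∨
          ((i3.val ≤ j'.val ∧ j'.val < i4.val) ∨ (i4.val ≤ j'.val ∧ j'.val < i3.val)) := by
        rcases hside with h | h <;> omega
      rcases hyor with h | h
      · have hyin : s(v i1, v i2) ∈ crossSet G v C j' :=
          ⟨hcr1.1, (crossPred_iff hinj j' i1 i2).mpr ⟨hab, h⟩⟩
        apply ncard_aux (Set.toFinite _) hyin
        intro e he
        simp only [Set.mem_insert_iff, Set.mem_diff, Set.mem_singleton_iff]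
        rcases hsplit j' e he with ⟨h1, h2, h3⟩ | ⟨(rfl | rfl), hp⟩
        · exact Or.inr ⟨h1, h2⟩
        · exact Or.inl rfl
        · exact absurd hp hbd'
      · have hyin : s(v i3, v i4) ∈ crossSet G v C j' :=
          ⟨hcr2.1, (crossPred_iff hinj j' i3 i4).mpr ⟨hcd, h⟩⟩
        apply ncard_aux (Set.toFinite _) hyin
        intro e he
        simp only [Set.mem_insert_iff, Set.mem_diff, Set.mem_singleton_iff]
        rcases hsplit j' e he with ⟨h1, h2, h3⟩ | ⟨(rfl | rfl), hp⟩
        · exact Or.inr ⟨h1, h3⟩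
        · exact Or.inl rfl
        · exact absurd hp hbd'
    · have t1 := ((crossPred_iff hinj j' i2 i4).mp hbd').2
      have hyor : ((i1.val ≤ j'.val ∧ j'.val < i2.val) ∨ (i2.val ≤ j'.val ∧ j'.val < i1.val)) ∨
          ((i3.val ≤ j'.val ∧ j'.val < i4.val) ∨ (i4.val ≤ j'.val ∧ j'.val < i3.val)) := by
        rcases hside with h | h <;> omega
      rcases hyor with h | h
      · have hyin : s(v i1, v i2) ∈ crossSet G v C j' :=
          ⟨hcr1.1, (crossPred_iff hinj j' i1 i2).mpr ⟨hab, h⟩⟩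
        apply ncard_aux (Set.toFinite _) hyin
        intro e he
        simp only [Set.mem_insert_iff, Set.mem_diff, Set.mem_singleton_iff]
        rcases hsplit j' e he with ⟨h1, h2, h3⟩ | ⟨(rfl | rfl), hp⟩
        · exact Or.inr ⟨h1, h2⟩
        · exact absurd hp hac'
        · exact Or.inl rfl
      · have hyin : s(v i3, v i4) ∈ crossSet G v C j' :=
          ⟨hcr2.1, (crossPred_iff hinj j' i3 i4).mpr ⟨hcd, h⟩⟩
        apply ncard_aux (Set.toFinite _) hyin
        intro e he
        simp only [Set.mem_insert_iff, Set.mem_diff, Set.mem_singleton_iff]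
        rcases hsplit j' e he with ⟨h1, h2, h3⟩ | ⟨(rfl | rfl), hp⟩
        · exact Or.inr ⟨h1, h3⟩
        · exact absurd hp hac'
        · exact Or.inl rfl
    · apply Set.ncard_le_ncard _ (Set.toFinite _)
      intro e he
      rcases hsplit j' e he with ⟨h1, -⟩ | ⟨(rfl | rfl), hp⟩
      · exact h1
      · exact absurd hp hac'
      · exact absurd hp hbd'
  have hnac : ¬ crossPred G v j (s(v i1, v i3)) := by
    intro hp
    have := ((crossPred_iff hinj j i1 i3).mp hp).2
    rcases hside with h | h <;> omega
  have hnbd : ¬ crossPred G v j (s(v i2, v i4)) := by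
    intro hp
    have := ((crossPred_iff hinj j i2 i4).mp hp).2
    rcases hside with h | h <;> omega
  have hstrict : (crossSet G v C' j).ncard < (crossSet G v C j).ncard := by
    have hsub : crossSet G v C' j ⊆ crossSet G v C j \ {s(v i1, v i2), s(v i3, v i4)} := by
      intro e he
      rcases hsplit j e he with ⟨h1, h2, h3⟩ | ⟨(rfl | rfl), hp⟩
      · exact ⟨h1, by simp [h2, h3]⟩
      · exact absurd hp hnac
      · exact absurd hp hnbd
    have hsub2 : ({s(v i1, v i2), s(v i3, v i4)} : Set (Sym2 V)) ⊆ crossSet G v C j := by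
      intro e he
      rcases he with rfl | rfl
      exacts [hcr1, hcr2]
    have h1 : (crossSet G v C' j).ncard ≤
        (crossSet G v C j \ {s(v i1, v i2), s(v i3, v i4)}).ncard :=
      Set.ncard_le_ncard hsub (Set.toFinite _)
    have h2 : (crossSet G v C j \ {s(v i1, v i2), s(v i3, v i4)}).ncard =
        (crossSet G v C j).ncard - ({s(v i1, v i2), s(v i3, v i4)} : Set (Sym2 V)).ncard :=
      Set.ncard_diff hsub2 (Set.toFinite _)
    have h3 : ({s(v i1, v i2), s(v i3, v i4)} : Set (Sym2 V)).ncard = 2 := Set.ncard_pair hne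
    omega
  have hedgNE : ∀ e, e ∉ edgesIn G (Set.range v) → (e ∈ C'.edges ↔ e ∈ C.edges) := by
    intro e hE
    rw [hedg' e]
    constructor
    · rintro (⟨h1, -, -⟩ | rfl | rfl)
      · exact h1
      · exact absurd hEZac hE
      · exact absurd hEZbd hE
    · intro h
      exact Or.inl ⟨h, fun hh => hE (hh ▸ hEZab), fun hh => hE (hh ▸ hEZcd)⟩
  exact ⟨C', hcyc, hsup', hedgNE, hcount, hstrict⟩
lemma key {V : Type*} [Fintype V] [DecidableEq V] {G : SimpleGraph V} {k' : ℕ} {v : Fin k' → V}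
    (hinj : Function.Injective v)
    (hadj : ∀ a b : Fin k', a ≠ b → G.Adj (v a) (v b)) :
    ∀ (n : ℕ) (w : V) (C : G.Walk w w), C.IsCycle →
      (∑ j : Fin k', (crossSet G v C j).ncard) ≤ n →
      ∃ C' : G.Walk w w, C'.IsCycle ∧
        (∀ x, x ∈ C'.support ↔ x ∈ C.support) ∧
        (∀ e, e ∉ edgesIn G (Set.range v) → (e ∈ C'.edges ↔ e ∈ C.edges)) ∧
        (∀ j : Fin k', (crossSet G v C' j).ncard ≤ 2) := by
  intro n
  induction n using Nat.strong_induction_on with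
  | _ n IH =>
  intro w C hC hsum
  by_cases hgood : ∀ j : Fin k', (crossSet G v C j).ncard ≤ 2
  · exact ⟨C, hC, fun _ => Iff.rfl, fun _ _ => Iff.rfl, hgood⟩
  push_neg at hgood
  obtain ⟨j, hj⟩ := hgood
  have hj3 : 3 ≤ (crossSet G v C j).ncard := hj
  obtain ⟨e1, e2, e3, he1, he2, he3, h12, h13, h23⟩ := three_of_ncard (Set.toFinite _) hj3
  obtain ⟨D1, a1, b1, hm1, hd1, hf1, hs1, hside1⟩ := cross_dart he1
  obtain ⟨D2, a2, b2, hm2, hd2, hf2, hs2, hside2⟩ := cross_dart he2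
  obtain ⟨D3, a3, b3, hm3, hd3, hf3, hs3, hside3⟩ := cross_dart he3
  have hc1 : D1.edge ∈ crossSet G v C j := by rw [hd1]; exact he1
  have hc2 : D2.edge ∈ crossSet G v C j := by rw [hd2]; exact he2
  have hc3 : D3.edge ∈ crossSet G v C j := by rw [hd3]; exact he3
  have hE12 : D1.edge ≠ D2.edge := by rw [hd1, hd2]; exact h12
  have hE13 : D1.edge ≠ D3.edge := by rw [hd1, hd3]; exact h13
  have hE23 : D2.edge ≠ D3.edge := by rw [hd2, hd3]; exact h23
  have hD12 : D1 ≠ D2 := fun h => hE12 (by rw [h])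
  have hD13 : D1 ≠ D3 := fun h => hE13 (by rw [h])
  have hD23 : D2 ≠ D3 := fun h => hE23 (by rw [h])
  suffices H : ∃ (DA DB : G.Dart) (m1 m2 m3 m4 : Fin k'),
      DA ∈ C.darts ∧ DB ∈ C.darts ∧ DA ≠ DB ∧
      DA.edge ∈ crossSet G v C j ∧ DB.edge ∈ crossSet G v C j ∧ DA.edge ≠ DB.edge ∧
      DA.fst = v m1 ∧ DA.snd = v m2 ∧ DB.fst = v m3 ∧ DB.snd = v m4 ∧
      ((m1.val ≤ j.val ∧ m3.val ≤ j.val ∧ j.val < m2.val ∧ j.val < m4.val) ∨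
       (j.val < m1.val ∧ j.val < m3.val ∧ m2.val ≤ j.val ∧ m4.val ≤ j.val)) by
    obtain ⟨DA, DB, m1, m2, m3, m4, hmA, hmB, hDne, hcA, hcB, hEne,
      hfA, hsA, hfB, hsB, hside⟩ := H
    obtain ⟨E1, E2, hor, P1, P2, P3, hdec⟩ := darts_decomp2 C DA DB hmA hmB hDne
    have hedgeA : DA.edge = s(DA.fst, DA.snd) := rfl
    have hedgeB : DB.edge = s(DB.fst, DB.snd) := rfl
    rcases hor with ⟨rfl, rfl⟩ | ⟨rfl, rfl⟩
    · obtain ⟨C', hcyc, hsup', hedg', hle, hstrict⟩ :=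
        step hinj hadj hC hj3 hfA hsA hfB hsB hdec
          (by rw [← hedgeA]; exact hcA)
          (by rw [← hedgeB]; exact hcB)
          (by rw [← hedgeA, ← hedgeB]; exact hEne)
          hside
      have hlt : (∑ j' : Fin k', (crossSet G v C' j').ncard) <
          ∑ j' : Fin k', (crossSet G v C j').ncard :=
        Finset.sum_lt_sum (fun j' _ => hle j') ⟨j, Finset.mem_univ j, hstrict⟩
      obtain ⟨C'', hcyc'', hsup'', hedg'', hcnt''⟩ :=
        IH (∑ j' : Fin k', (crossSet G v C' j').ncard) (by omega) w C' hcyc le_rfl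
      exact ⟨C'', hcyc'', fun x => (hsup'' x).trans (hsup' x),
        fun e he => (hedg'' e he).trans (hedg' e he), hcnt''⟩
    · have hside' : (m3.val ≤ j.val ∧ m1.val ≤ j.val ∧ j.val < m4.val ∧ j.val < m2.val) ∨
          (j.val < m3.val ∧ j.val < m1.val ∧ m4.val ≤ j.val ∧ m2.val ≤ j.val) := by
        rcases hside with h | h
        · exact Or.inl ⟨h.2.1, h.1, h.2.2.2, h.2.2.1⟩
        · exact Or.inr ⟨h.2.1, h.1, h.2.2.2, h.2.2.1⟩
      obtain ⟨C', hcyc, hsup', hedg', hle, hstrict⟩ :=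
        step hinj hadj hC hj3 hfB hsB hfA hsA hdec
          (by rw [← hedgeB]; exact hcB)
          (by rw [← hedgeA]; exact hcA)
          (by rw [← hedgeB, ← hedgeA]; exact hEne.symm)
          hside'
      have hlt : (∑ j' : Fin k', (crossSet G v C' j').ncard) <
          ∑ j' : Fin k', (crossSet G v C j').ncard :=
        Finset.sum_lt_sum (fun j' _ => hle j') ⟨j, Finset.mem_univ j, hstrict⟩
      obtain ⟨C'', hcyc'', hsup'', hedg'', hcnt''⟩ :=
        IH (∑ j' : Fin k', (crossSet G v C' j').ncard) (by omega) w C' hcyc le_rfl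
      exact ⟨C'', hcyc'', fun x => (hsup'' x).trans (hsup' x),
        fun e he => (hedg'' e he).trans (hedg' e he), hcnt''⟩
  rcases hside1 with h1 | h1 <;> rcases hside2 with h2 | h2 <;> rcases hside3 with h3 | h3
  · exact ⟨D1, D2, a1, b1, a2, b2, hm1, hm2, hD12, hc1, hc2, hE12, hf1, hs1, hf2, hs2,
      Or.inl ⟨h1.1, h2.1, h1.2, h2.2⟩⟩
  · exact ⟨D1, D2, a1, b1, a2, b2, hm1, hm2, hD12, hc1, hc2, hE12, hf1, hs1, hf2, hs2,
      Or.inl ⟨h1.1, h2.1, h1.2, h2.2⟩⟩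
  · exact ⟨D1, D3, a1, b1, a3, b3, hm1, hm3, hD13, hc1, hc3, hE13, hf1, hs1, hf3, hs3,
      Or.inl ⟨h1.1, h3.1, h1.2, h3.2⟩⟩
  · exact ⟨D2, D3, a2, b2, a3, b3, hm2, hm3, hD23, hc2, hc3, hE23, hf2, hs2, hf3, hs3,
      Or.inr ⟨h2.2, h3.2, h2.1, h3.1⟩⟩
  · exact ⟨D2, D3, a2, b2, a3, b3, hm2, hm3, hD23, hc2, hc3, hE23, hf2, hs2, hf3, hs3,
      Or.inl ⟨h2.1, h3.1, h2.2, h3.2⟩⟩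
  · exact ⟨D1, D3, a1, b1, a3, b3, hm1, hm3, hD13, hc1, hc3, hE13, hf1, hs1, hf3, hs3,
      Or.inr ⟨h1.2, h3.2, h1.1, h3.1⟩⟩
  · exact ⟨D1, D2, a1, b1, a2, b2, hm1, hm2, hD12, hc1, hc2, hE12, hf1, hs1, hf2, hs2,
      Or.inr ⟨h1.2, h2.2, h1.1, h2.1⟩⟩
  · exact ⟨D1, D2, a1, b1, a2, b2, hm1, hm2, hD12, hc1, hc2, hE12, hf1, hs1, hf2, hs2,
      Or.inr ⟨h1.2, h2.2, h1.1, h2.1⟩⟩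

end Aux

/-- given a cycle `C` in `G`, a clique `K`, and an arbitrary
ordering `v_1, …, v_{k'}` of the set `Z` of vertices incident in `C` with an
edge of `E(C) ∩ E(K)`, there is a cycle `C'` on the same vertex set, agreeing
with `C` outside `E(Z)`, whose edges inside `Z` cross every prefix/suffix cut of
the ordering at most twice. -/
theorem stmt_7 {V : Type*} [Fintype V] [DecidableEq V] (G : SimpleGraph V)
    (w : V) (C : G.Walk w w) (hC : C.IsCycle)
    (K : Set V) (hK : G.IsClique K)
    (k' : ℕ) (v : Fin k' → V) (hinj : Function.Injective v)
    (hZ : Set.range v = {x | ∃ e ∈ C.edges, e ∈ edgesIn G K ∧ x ∈ e}) :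
    ∃ (w' : V) (C' : G.Walk w' w'), C'.IsCycle ∧
      {x | x ∈ C'.support} = {x | x ∈ C.support} ∧
      {e | e ∈ C'.edges} \ edgesIn G (Set.range v)
        = {e | e ∈ C.edges} \ edgesIn G (Set.range v) ∧
      ∀ j : Fin k',
        {e | e ∈ C'.edges ∧ e ∈ edgesIn G (Set.range v) ∧
          ∃ p q, e = s(p, q) ∧ p ∈ v '' {i | i ≤ j} ∧ q ∈ v '' {i | j < i}}.ncard ≤ 2 := by
  have hZK : ∀ i : Fin k', v i ∈ K := by
    intro i
    have hv : v i ∈ Set.range v := ⟨i, rfl⟩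
    rw [hZ] at hv
    obtain ⟨e, heC, heK, hxe⟩ := hv
    exact heK.2 _ hxe
  have hadj : ∀ a b : Fin k', a ≠ b → G.Adj (v a) (v b) :=
    fun a b h => hK (hZK a) (hZK b) (hinj.ne h)
  obtain ⟨C', hcyc, hsup, hedg, hcnt⟩ :=
    key hinj hadj (∑ j : Fin k', (crossSet G v C j).ncard) w C hC le_rfl
  refine ⟨w, C', hcyc, ?_, ?_, ?_⟩
  · exact Set.ext fun x => hsup x
  · ext e
    simp only [Set.mem_diff, Set.mem_setOf_eq]
    exact ⟨fun ⟨he, hn⟩ => ⟨(hedg e hn).mp he, hn⟩, fun ⟨he, hn⟩ => ⟨(hedg e hn).mpr he, hn⟩⟩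
  · intro j
    exact hcnt j
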